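/- arXiv:1503.01599 — 8 statements merged into one kernel-verified Lean document; each statement's English description precedes it below -/
import Mathlib

section
/- Let (G,P,θ) be an algebraic dynamical system and write X_{(g,p)} = (g,p)·(G ⋊_θ P) for the principal right ideal of G ⋊_θ P generated by (g,p). For all g,h ∈ G and p,q ∈ P: if there exist r ∈ P with pP ∩ qP = rP and k ∈ G with g·θ_p(k) ∈ h·θ_q(G), then X_{(g,p)} ∩ X_{(h,q)} = X_{(g·θ_p(k),r)}; otherwise X_{(g,p)} ∩ X_{(h,q)} = ∅. -/
open Pointwise

/-- The principal right ideal `pS` of a monoid `S`. -/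
def rIdeal {S : Type*} [Monoid S] (p : S) : Set S :=
  Set.range fun s => p * s

/-- An algebraic dynamical system: a group `G`, a right LCM monoid `P`, and an action `θ` of
`P` by injective group endomorphisms of `G` which respects the order on `P`. -/
structure AlgDynSys (G P : Type*) [Group G] [Monoid P] where
  θ : P → G → G
  θ_hom : ∀ p a b, θ p (a * b) = θ p a * θ p b
  θ_one : ∀ a, θ 1 a = a
  θ_mul : ∀ p q a, θ (p * q) a = θ p (θ q a)
  θ_inj : ∀ p, Function.Injective (θ p)
  left_cancel : ∀ a b c : P, a * b = a * c → b = c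
  lcm : ∀ p q : P, rIdeal p ∩ rIdeal q = ∅ ∨ ∃ r, rIdeal p ∩ rIdeal q = rIdeal r
  respects : ∀ p q r : P, rIdeal p ∩ rIdeal q = rIdeal r →
    Set.range (θ p) ∩ Set.range (θ q) = Set.range (θ r)

namespace AlgDynSys

variable {G P : Type*} [Group G] [Monoid P]

/-- The multiplication of the semidirect product `G ⋊_θ P` on `G × P`. -/
def sdMul (A : AlgDynSys G P) (x y : G × P) : G × P :=
  (x.1 * A.θ x.2 y.1, x.2 * y.2)

/-- The principal right ideal `x · (G ⋊_θ P)` of the semidirect product. -/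
def sdIdeal (A : AlgDynSys G P) (x : G × P) : Set (G × P) :=
  Set.range (A.sdMul x)

end AlgDynSys

namespace AlgDynSys

variable {G P : Type*} [Group G] [Monoid P] (A : AlgDynSys G P)

lemma θ_map_one (p : P) : A.θ p 1 = 1 := by
  have h := A.θ_hom p 1 1
  rw [one_mul] at h
  exact left_eq_mul.mp h

lemma θ_map_inv (p : P) (a : G) : A.θ p a⁻¹ = (A.θ p a)⁻¹ := by
  have h : A.θ p a * A.θ p a⁻¹ = 1 := by
    rw [← A.θ_hom, mul_inv_cancel, A.θ_map_one]
  exact eq_inv_of_mul_eq_one_right h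

lemma mem_sdIdeal {x : G × P} {g : G} {p : P} :
    x ∈ A.sdIdeal (g, p) ↔ (∃ a, x.1 = g * A.θ p a) ∧ ∃ s, x.2 = p * s := by
  constructor
  · rintro ⟨⟨a, s⟩, rfl⟩
    exact ⟨⟨a, rfl⟩, ⟨s, rfl⟩⟩
  · rintro ⟨⟨a, ha⟩, ⟨s, hs⟩⟩
    exact ⟨(a, s), Prod.ext ha.symm hs.symm⟩

lemma coord1 (g h : G) (p q r : P) (k l : G)
    (hr : rIdeal p ∩ rIdeal q = rIdeal r)
    (hkl : g * A.θ p k = h * A.θ q l) (x : G) :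
    ((∃ a, x = g * A.θ p a) ∧ ∃ b, x = h * A.θ q b) ↔
      ∃ c, x = g * A.θ p k * A.θ r c := by
  have hresp := A.respects p q r hr
  constructor
  · rintro ⟨⟨a, rfl⟩, ⟨b, hb⟩⟩
    have h1 : (g * A.θ p k)⁻¹ * (g * A.θ p a) ∈ Set.range (A.θ p) := by
      refine ⟨k⁻¹ * a, ?_⟩
      rw [A.θ_hom, A.θ_map_inv]
      group
    have h2 : (g * A.θ p k)⁻¹ * (g * A.θ p a) ∈ Set.range (A.θ q) := by
      rw [hkl, hb]
      refine ⟨l⁻¹ * b, ?_⟩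
      rw [A.θ_hom, A.θ_map_inv]
      group
    obtain ⟨c, hc⟩ : (g * A.θ p k)⁻¹ * (g * A.θ p a) ∈ Set.range (A.θ r) :=
      hresp ▸ Set.mem_inter h1 h2
    refine ⟨c, ?_⟩
    rw [hc]
    group
  · rintro ⟨c, rfl⟩
    have hmem : A.θ r c ∈ Set.range (A.θ p) ∩ Set.range (A.θ q) := hresp ▸ ⟨c, rfl⟩
    obtain ⟨⟨a, ha⟩, ⟨b, hb⟩⟩ := hmem
    refine ⟨⟨k * a, ?_⟩, ⟨l * b, ?_⟩⟩
    · rw [A.θ_hom, ha, mul_assoc]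
    · rw [A.θ_hom, hb, ← mul_assoc, ← hkl]

lemma coord2 {p q r : P} (hr : rIdeal p ∩ rIdeal q = rIdeal r) (x : P) :
    ((∃ s, x = p * s) ∧ ∃ t, x = q * t) ↔ ∃ u, x = r * u := by
  have h := Set.ext_iff.mp hr x
  simp only [rIdeal, Set.mem_inter_iff, Set.mem_range] at h
  constructor
  · rintro ⟨⟨s, hs⟩, ⟨t, ht⟩⟩
    obtain ⟨u, hu⟩ := h.mp ⟨⟨s, hs.symm⟩, ⟨t, ht.symm⟩⟩
    exact ⟨u, hu.symm⟩
  · rintro ⟨u, hu⟩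
    obtain ⟨⟨s, hs⟩, ⟨t, ht⟩⟩ := h.mpr ⟨u, hu.symm⟩
    exact ⟨⟨s, hs.symm⟩, ⟨t, ht.symm⟩⟩

end AlgDynSys

/-- description of intersections of principal right ideals
`X_{(g,p)} ∩ X_{(h,q)}` in the semidirect product `G ⋊_θ P`. -/
theorem sdp_ideal_intersection {G P : Type*} [Group G] [Monoid P]
    (A : AlgDynSys G P) (g h : G) (p q : P) :
    (∀ (r : P) (k : G), rIdeal p ∩ rIdeal q = rIdeal r →
      (∃ l : G, g * A.θ p k = h * A.θ q l) →
      A.sdIdeal (g, p) ∩ A.sdIdeal (h, q) = A.sdIdeal (g * A.θ p k, r)) ∧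
    (¬ (∃ r : P, rIdeal p ∩ rIdeal q = rIdeal r ∧
        ∃ k l : G, g * A.θ p k = h * A.θ q l) →
      A.sdIdeal (g, p) ∩ A.sdIdeal (h, q) = ∅) := by
  constructor
  · rintro r k hr ⟨l, hkl⟩
    ext x
    rw [Set.mem_inter_iff, A.mem_sdIdeal, A.mem_sdIdeal, A.mem_sdIdeal, and_and_and_comm]
    exact and_congr (A.coord1 g h p q r k l hr hkl x.1) (AlgDynSys.coord2 hr x.2)
  · intro hne
    rw [Set.eq_empty_iff_forall_notMem]
    rintro x ⟨hx, hy⟩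
    rw [A.mem_sdIdeal] at hx hy
    rcases A.lcm p q with hE | ⟨r, hr⟩
    · obtain ⟨s, hs⟩ := hx.2
      obtain ⟨t, ht⟩ := hy.2
      have : x.2 ∈ rIdeal p ∩ rIdeal q := ⟨⟨s, hs.symm⟩, ⟨t, ht.symm⟩⟩
      rw [hE] at this
      exact this
    · obtain ⟨a, ha⟩ := hx.1
      obtain ⟨b, hb⟩ := hy.1
      exact hne ⟨r, hr, a, b, ha.symm.trans hb⟩
end

section
/- Let (G,P,θ) be an algebraic dynamical system and let S = G ⋊_θ P. The family of principal right ideals of S is independent: if a principal right ideal X of S is the union of finitely many principal right ideals X₁,…,Xₙ of S, then X = X_j for some j ∈ {1,…,n}. -/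
open Pointwise

/-- the family of principal right ideals of `S = G ⋊_θ P` is independent:
if a principal right ideal is a finite union of principal right ideals, it equals one
of them. -/
theorem sdp_ideals_independent {G P : Type*} [Group G] [Monoid P]
    (A : AlgDynSys G P) (n : ℕ) (x : G × P) (xs : Fin n → G × P)
    (h : A.sdIdeal x = ⋃ j, A.sdIdeal (xs j)) :
    ∃ j, A.sdIdeal x = A.sdIdeal (xs j) := by
  have hθ1 : ∀ p : P, A.θ p 1 = 1 := by
    intro p
    have := A.θ_hom p 1 1
    simp only [mul_one] at this
    exact (left_eq_mul.mp this)
  have hassoc : ∀ a b c : G × P, A.sdMul (A.sdMul a b) c = A.sdMul a (A.sdMul b c) := by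
    intro a b c
    simp [AlgDynSys.sdMul, A.θ_mul, A.θ_hom, mul_assoc]
  have hx : x ∈ A.sdIdeal x := ⟨(1, 1), by simp [AlgDynSys.sdMul, hθ1]⟩
  rw [h] at hx
  obtain ⟨j, s, hs⟩ := Set.mem_iUnion.mp hx
  refine ⟨j, subset_antisymm ?_ ?_⟩
  · rintro _ ⟨t, rfl⟩
    exact ⟨A.sdMul s t, by rw [← hassoc, hs]⟩
  · rw [h]
    exact Set.subset_iUnion (fun j => A.sdIdeal (xs j)) j
end

section
/- Let (G,P,θ) be an algebraic dynamical system. Then the semidirect product G ⋊_θ P is a right LCM monoid: it is left cancellative, and for all (g,p),(h,q) ∈ G ⋊_θ P the intersection (g,p)(G ⋊_θ P) ∩ (h,q)(G ⋊_θ P) is either empty or a principal right ideal of G ⋊_θ P. -/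
open Pointwise

namespace AlgDynSys

variable {G P : Type*} [Group G] [Monoid P]

theorem theta_one' (A : AlgDynSys G P) (p : P) : A.θ p 1 = 1 := by
  have h := A.θ_hom p 1 1
  rw [one_mul] at h
  exact left_eq_mul.mp h

theorem theta_inv (A : AlgDynSys G P) (p : P) (a : G) : A.θ p a⁻¹ = (A.θ p a)⁻¹ := by
  refine eq_inv_of_mul_eq_one_left ?_
  rw [← A.θ_hom, inv_mul_cancel, A.theta_one']

end AlgDynSys

/-- the semidirect product `G ⋊_θ P` of an algebraic dynamical system is a
right LCM monoid: it is left cancellative and intersections of principal right ideals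
are empty or principal. -/
theorem sdp_right_LCM {G P : Type*} [Group G] [Monoid P] (A : AlgDynSys G P) :
    (∀ x y z : G × P, A.sdMul x y = A.sdMul x z → y = z) ∧
    (∀ x y : G × P,
      A.sdIdeal x ∩ A.sdIdeal y = ∅ ∨ ∃ z, A.sdIdeal x ∩ A.sdIdeal y = A.sdIdeal z) := by
  constructor
  · rintro ⟨g, p⟩ ⟨h₁, q₁⟩ ⟨h₂, q₂⟩ hxy
    simp only [AlgDynSys.sdMul, Prod.mk.injEq] at hxy
    obtain ⟨h1, h2⟩ := hxy
    have hq := A.left_cancel p q₁ q₂ h2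
    have hg := A.θ_inj p (mul_left_cancel h1)
    simp [hg, hq]
  · rintro ⟨g, p⟩ ⟨h, q⟩
    rcases A.lcm p q with hpq | ⟨r, hr⟩
    · left
      ext ⟨k, s⟩
      simp only [Set.mem_inter_iff, Set.mem_empty_iff_false, iff_false]
      rintro ⟨⟨⟨a, u⟩, ha⟩, ⟨⟨b, v⟩, hb⟩⟩
      have hs : s ∈ rIdeal p ∩ rIdeal q :=
        ⟨⟨u, congrArg Prod.snd ha⟩, ⟨v, congrArg Prod.snd hb⟩⟩
      rw [hpq] at hs
      exact hs
    · by_cases hGH : ∃ a b : G, g * A.θ p a = h * A.θ q b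
      · right
        obtain ⟨a0, b0, hab⟩ := hGH
        have hrange := A.respects p q r hr
        have hr_in : r ∈ rIdeal p ∩ rIdeal q := by
          rw [hr]; exact ⟨1, mul_one r⟩
        obtain ⟨⟨p', hp'⟩, ⟨q', hq'⟩⟩ := hr_in
        dsimp only at hp' hq'
        refine ⟨(g * A.θ p a0, r), ?_⟩
        ext ⟨k, s⟩
        constructor
        · rintro ⟨⟨⟨c, u⟩, hc⟩, ⟨⟨d, v⟩, hd⟩⟩
          simp only [AlgDynSys.sdMul, Prod.mk.injEq] at hc hd
          obtain ⟨hc1, hc2⟩ := hc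
          obtain ⟨hd1, hd2⟩ := hd
          have hs : s ∈ rIdeal r := by
            rw [← hr]; exact ⟨⟨u, hc2⟩, ⟨v, hd2⟩⟩
          obtain ⟨w, hw⟩ := hs
          dsimp only at hw
          have hmem : A.θ p (a0⁻¹ * c) ∈ Set.range (A.θ r) := by
            rw [← hrange]
            constructor
            · exact ⟨a0⁻¹ * c, rfl⟩
            · refine ⟨b0⁻¹ * d, ?_⟩
              rw [A.θ_hom, A.θ_hom, A.theta_inv, A.theta_inv]
              rw [← mul_left_cancel_iff (a := h * A.θ q b0)]
              rw [← mul_assoc, mul_inv_cancel_right, hd1, ← hc1, ← hab,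
                ← mul_assoc, mul_inv_cancel_right]
          obtain ⟨e, he⟩ := hmem
          refine ⟨(e, w), ?_⟩
          simp only [AlgDynSys.sdMul, Prod.mk.injEq]
          constructor
          · rw [he, A.θ_hom, A.theta_inv, mul_assoc, ← mul_assoc (A.θ p a0),
              mul_inv_cancel, one_mul, hc1]
          · rw [hw]
        · rintro ⟨⟨c, u⟩, hc⟩
          simp only [AlgDynSys.sdMul, Prod.mk.injEq] at hc
          obtain ⟨hc1, hc2⟩ := hc
          constructor
          · refine ⟨(a0 * A.θ p' c, p' * u), ?_⟩
            simp only [AlgDynSys.sdMul, Prod.mk.injEq]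
            constructor
            · rw [A.θ_hom, ← A.θ_mul, hp', ← mul_assoc, hc1]
            · rw [← mul_assoc, hp', hc2]
          · refine ⟨(b0 * A.θ q' c, q' * u), ?_⟩
            simp only [AlgDynSys.sdMul, Prod.mk.injEq]
            constructor
            · rw [A.θ_hom, ← A.θ_mul, hq', ← mul_assoc, ← hab, hc1]
            · rw [← mul_assoc, hq', hc2]
      · left
        ext ⟨k, s⟩
        simp only [Set.mem_inter_iff, Set.mem_empty_iff_false, iff_false]
        rintro ⟨⟨⟨a, u⟩, ha⟩, ⟨⟨b, v⟩, hb⟩⟩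
        exact hGH ⟨a, b, (congrArg Prod.fst ha).trans (congrArg Prod.fst hb).symm⟩
end

section
/- Let (G₁,P₁,θ₁) and (G₂,P₂,θ₂) be algebraic dynamical systems, let (φ_G,φ_P) be a morphism between them, let S_i = G_i ⋊_{θ_i} P_i, and let φ = φ_G ⋊ φ_P : S₁ → S₂ be the induced monoid homomorphism (g,p) ↦ (φ_G(g),φ_P(p)). Then φ satisfies φ(a)S₂ ∩ φ(b)S₂ = φ(aS₁ ∩ bS₁)S₂ for all a,b ∈ S₁ if and only if the morphism (φ_G,φ_P) is admissible. -/
open Pointwise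

/-- A morphism of algebraic dynamical systems: a group homomorphism `φG` and an
identity-preserving monoid homomorphism `φP`, intertwining the actions. -/
structure ADSHom {G₁ P₁ G₂ P₂ : Type*} [Group G₁] [Monoid P₁] [Group G₂] [Monoid P₂]
    (A₁ : AlgDynSys G₁ P₁) (A₂ : AlgDynSys G₂ P₂) where
  φG : G₁ →* G₂
  φP : P₁ →* P₂
  equivariant : ∀ p g, φG (A₁.θ p g) = A₂.θ (φP p) (φG g)

/-- For `X ⊆ P₁`, the right ideal `φ(X)P₂ = {φ(x)·s : x ∈ X, s ∈ P₂}` of `P₂`. -/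
def imgIdeal {P₁ P₂ : Type*} [Monoid P₁] [Monoid P₂] (φ : P₁ → P₂) (X : Set P₁) : Set P₂ :=
  {y | ∃ x ∈ X, ∃ s : P₂, y = φ x * s}

/-- Admissibility of a morphism of algebraic dynamical systems: conditions (iv) and (v). -/
def ADSHom.Admissible {G₁ P₁ G₂ P₂ : Type*} [Group G₁] [Monoid P₁] [Group G₂] [Monoid P₂]
    {A₁ : AlgDynSys G₁ P₁} {A₂ : AlgDynSys G₂ P₂} (f : ADSHom A₁ A₂) : Prop :=
  (∀ p q : P₁, rIdeal (f.φP p) ∩ rIdeal (f.φP q) = imgIdeal f.φP (rIdeal p ∩ rIdeal q)) ∧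
  (∀ p q : P₁, (rIdeal p ∩ rIdeal q).Nonempty →
    f.φG ⁻¹' (Set.range f.φG ∩ (Set.range (A₂.θ (f.φP p)) * Set.range (A₂.θ (f.φP q)))) =
      Set.range (A₁.θ p) * Set.range (A₁.θ q))

section Helpers

variable {G P : Type*} [Group G] [Monoid P]

lemma AlgDynSys.theta_one (A : AlgDynSys G P) (p : P) : A.θ p 1 = 1 := by
  have h := A.θ_hom p 1 1
  rw [mul_one] at h
  exact left_eq_mul.mp h

lemma AlgDynSys.theta_inv_s7 (A : AlgDynSys G P) (p : P) (x : G) :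
    A.θ p x⁻¹ = (A.θ p x)⁻¹ := by
  apply eq_inv_of_mul_eq_one_left
  rw [← A.θ_hom, inv_mul_cancel, A.theta_one]

lemma mem_rIdeal {p s : P} : s ∈ rIdeal p ↔ ∃ t, s = p * t := by
  constructor
  · rintro ⟨t, rfl⟩; exact ⟨t, rfl⟩
  · rintro ⟨t, rfl⟩; exact ⟨t, rfl⟩

lemma AlgDynSys.mem_sdIdeal_s7 (A : AlgDynSys G P) {g k : G} {p s : P} :
    (k, s) ∈ A.sdIdeal (g, p) ↔ (∃ h, k = g * A.θ p h) ∧ ∃ t, s = p * t := by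
  constructor
  · rintro ⟨⟨h, t⟩, hx⟩
    exact ⟨⟨h, (Prod.ext_iff.mp hx).1.symm⟩, t, (Prod.ext_iff.mp hx).2.symm⟩
  · rintro ⟨⟨h, rfl⟩, ⟨t, rfl⟩⟩
    exact ⟨(h, t), rfl⟩

lemma ADSHom.sdMul_mem {G₁ P₁ G₂ P₂ : Type*} [Group G₁] [Monoid P₁] [Group G₂] [Monoid P₂]
    {A₁ : AlgDynSys G₁ P₁} {A₂ : AlgDynSys G₂ P₂} (f : ADSHom A₁ A₂)
    {g h : G₁} {p r : P₁} (hm : (h, r) ∈ A₁.sdIdeal (g, p)) (w : G₂) (t : P₂) :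
    A₂.sdMul (f.φG h, f.φP r) (w, t) ∈ A₂.sdIdeal (f.φG g, f.φP p) := by
  obtain ⟨⟨x, rfl⟩, ⟨u, rfl⟩⟩ := A₁.mem_sdIdeal_s7.mp hm
  show (f.φG (g * A₁.θ p x) * A₂.θ (f.φP (p * u)) w, f.φP (p * u) * t) ∈ _
  refine A₂.mem_sdIdeal_s7.mpr ⟨⟨f.φG x * A₂.θ (f.φP u) w, ?_⟩, ⟨f.φP u * t, ?_⟩⟩
  · rw [map_mul, f.equivariant, map_mul, A₂.θ_mul, A₂.θ_hom, mul_assoc]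
  · rw [map_mul, mul_assoc]

end Helpers

/-- the induced homomorphism `φ = φ_G ⋊ φ_P : S₁ → S₂` between semidirect
products satisfies `φ(a)S₂ ∩ φ(b)S₂ = φ(aS₁ ∩ bS₁)S₂` for all `a, b ∈ S₁` iff the
morphism `(φ_G, φ_P)` is admissible. -/
theorem sdp_hom_funct_iff_admissible {G₁ P₁ G₂ P₂ : Type*}
    [Group G₁] [Monoid P₁] [Group G₂] [Monoid P₂]
    (A₁ : AlgDynSys G₁ P₁) (A₂ : AlgDynSys G₂ P₂) (f : ADSHom A₁ A₂) :
    (∀ a b : G₁ × P₁,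
        A₂.sdIdeal (f.φG a.1, f.φP a.2) ∩ A₂.sdIdeal (f.φG b.1, f.φP b.2) =
          {y | ∃ x ∈ A₁.sdIdeal a ∩ A₁.sdIdeal b,
            ∃ s : G₂ × P₂, y = A₂.sdMul (f.φG x.1, f.φP x.2) s}) ↔
      f.Admissible := by
  constructor
  · -- functoriality ⇒ admissible
    intro H
    constructor
    · -- condition (iv)
      intro p q
      apply Set.Subset.antisymm
      · intro s hs
        have h1 : ((1 : G₂), s) ∈
            A₂.sdIdeal (f.φG (1 : G₁), f.φP p) ∩ A₂.sdIdeal (f.φG (1 : G₁), f.φP q) := by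
          obtain ⟨hsp, hsq⟩ := hs
          exact ⟨A₂.mem_sdIdeal_s7.mpr ⟨⟨1, by rw [map_one, one_mul, A₂.theta_one]⟩,
                  mem_rIdeal.mp hsp⟩,
                A₂.mem_sdIdeal_s7.mpr ⟨⟨1, by rw [map_one, one_mul, A₂.theta_one]⟩,
                  mem_rIdeal.mp hsq⟩⟩
        have h2 := (Set.ext_iff.mp (H ((1 : G₁), p) ((1 : G₁), q)) ((1 : G₂), s)).mp h1
        obtain ⟨⟨h, r⟩, ⟨hma, hmb⟩, ⟨w, t⟩, hy⟩ := h2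
        exact ⟨r, ⟨mem_rIdeal.mpr (A₁.mem_sdIdeal_s7.mp hma).2,
          mem_rIdeal.mpr (A₁.mem_sdIdeal_s7.mp hmb).2⟩, t, (Prod.ext_iff.mp hy).2⟩
      · rintro s ⟨r, ⟨hrp, hrq⟩, t, rfl⟩
        obtain ⟨u, hu⟩ := mem_rIdeal.mp hrp
        obtain ⟨v, hv⟩ := mem_rIdeal.mp hrq
        exact ⟨mem_rIdeal.mpr ⟨f.φP u * t, by rw [hu, map_mul, mul_assoc]⟩,
               mem_rIdeal.mpr ⟨f.φP v * t, by rw [hv, map_mul, mul_assoc]⟩⟩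
    · -- condition (v)
      rintro p q ⟨r₀, hr0p, hr0q⟩
      obtain ⟨u, hu⟩ := mem_rIdeal.mp hr0p
      obtain ⟨v, hv⟩ := mem_rIdeal.mp hr0q
      apply Set.Subset.antisymm
      · intro g hg
        obtain ⟨-, hmul⟩ := hg
        obtain ⟨-, ⟨u₂, rfl⟩, -, ⟨v₂, rfl⟩, hk⟩ := Set.mem_mul.mp hmul
        have h1 : (A₂.θ (f.φP p) u₂, f.φP r₀) ∈
            A₂.sdIdeal (f.φG (1 : G₁), f.φP p) ∩ A₂.sdIdeal (f.φG g, f.φP q) := by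
          constructor
          · exact A₂.mem_sdIdeal_s7.mpr ⟨⟨u₂, by rw [map_one, one_mul]⟩,
              ⟨f.φP u, by rw [hu, map_mul]⟩⟩
          · refine A₂.mem_sdIdeal_s7.mpr ⟨⟨v₂⁻¹, ?_⟩, ⟨f.φP v, by rw [hv, map_mul]⟩⟩
            rw [A₂.theta_inv_s7, ← hk, mul_assoc, mul_inv_cancel, mul_one]
        have h2 := (Set.ext_iff.mp (H ((1 : G₁), p) (g, q)) _).mp h1
        obtain ⟨⟨h, r⟩, ⟨hma, hmb⟩, -, -⟩ := h2
        obtain ⟨⟨x, hx⟩, -⟩ := A₁.mem_sdIdeal_s7.mp hma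
        obtain ⟨⟨y, hy⟩, -⟩ := A₁.mem_sdIdeal_s7.mp hmb
        have hg2 : g * A₁.θ q y = A₁.θ p x := by rw [← hy, hx, one_mul]
        refine Set.mem_mul.mpr ⟨A₁.θ p x, ⟨x, rfl⟩, A₁.θ q y⁻¹, ⟨y⁻¹, rfl⟩, ?_⟩
        rw [A₁.theta_inv_s7]
        exact (eq_mul_inv_iff_mul_eq.mpr hg2).symm
      · rintro g hg
        obtain ⟨-, ⟨x, rfl⟩, -, ⟨y, rfl⟩, rfl⟩ := Set.mem_mul.mp hg
        refine ⟨⟨_, rfl⟩, Set.mem_mul.mpr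
          ⟨_, ⟨f.φG x, rfl⟩, _, ⟨f.φG y, rfl⟩, ?_⟩⟩
        rw [← f.equivariant, ← f.equivariant, ← map_mul]
  · -- admissible ⇒ functoriality
    rintro ⟨hiv, hv⟩ ⟨g, p⟩ ⟨g', q⟩
    apply Set.Subset.antisymm
    · rintro ⟨k, s⟩ ⟨hka, hkb⟩
      obtain ⟨⟨u₂, hk1⟩, ⟨c, hs1⟩⟩ := A₂.mem_sdIdeal_s7.mp hka
      obtain ⟨⟨v₂, hk2⟩, ⟨d, hs2⟩⟩ := A₂.mem_sdIdeal_s7.mp hkb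
      have hsmem : s ∈ rIdeal (f.φP p) ∩ rIdeal (f.φP q) :=
        ⟨mem_rIdeal.mpr ⟨c, hs1⟩, mem_rIdeal.mpr ⟨d, hs2⟩⟩
      rw [hiv p q] at hsmem
      obtain ⟨r', hr'mem, -, -⟩ := hsmem
      rcases A₁.lcm p q with hemp | ⟨r₁, hr₁⟩
      · exact absurd (hemp ▸ hr'mem) (Set.notMem_empty r')
      have hr₁mem : r₁ ∈ rIdeal p ∩ rIdeal q := by
        rw [hr₁]; exact ⟨1, mul_one r₁⟩
      obtain ⟨u₁, hu₁⟩ := mem_rIdeal.mp hr₁mem.1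
      obtain ⟨v₁, hv₁⟩ := mem_rIdeal.mp hr₁mem.2
      have himg : imgIdeal f.φP (rIdeal p ∩ rIdeal q) = rIdeal (f.φP r₁) := by
        rw [hr₁]
        ext z
        constructor
        · rintro ⟨x, hx, t, rfl⟩
          obtain ⟨w, hw⟩ := mem_rIdeal.mp hx
          exact mem_rIdeal.mpr ⟨f.φP w * t, by rw [hw, map_mul, mul_assoc]⟩
        · rintro ⟨t, ht⟩
          exact ⟨r₁, mem_rIdeal.mpr ⟨1, (mul_one r₁).symm⟩, t, ht.symm⟩
      have hiv' : rIdeal (f.φP p) ∩ rIdeal (f.φP q) = rIdeal (f.φP r₁) :=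
        (hiv p q).trans himg
      have hθ := A₂.respects _ _ _ hiv'
      have hs3 : s ∈ rIdeal (f.φP r₁) := by
        rw [← hiv']
        exact ⟨mem_rIdeal.mpr ⟨c, hs1⟩, mem_rIdeal.mpr ⟨d, hs2⟩⟩
      obtain ⟨t₀, hst0⟩ := mem_rIdeal.mp hs3
      have he : f.φG g * A₂.θ (f.φP p) u₂ = f.φG g' * A₂.θ (f.φP q) v₂ :=
        hk1.symm.trans hk2
      have key : f.φG (g⁻¹ * g') = A₂.θ (f.φP p) u₂ * (A₂.θ (f.φP q) v₂)⁻¹ := by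
        rw [map_mul, map_inv, inv_mul_eq_iff_eq_mul, ← mul_assoc, he, mul_assoc,
          mul_inv_cancel, mul_one]
      have hgmem : g⁻¹ * g' ∈ f.φG ⁻¹' (Set.range f.φG ∩
          (Set.range (A₂.θ (f.φP p)) * Set.range (A₂.θ (f.φP q)))) := by
        refine ⟨⟨_, rfl⟩, Set.mem_mul.mpr ⟨_, ⟨u₂, rfl⟩, _, ⟨v₂⁻¹, rfl⟩, ?_⟩⟩
        rw [A₂.theta_inv_s7]
        exact key.symm
      rw [hv p q ⟨r', hr'mem⟩] at hgmem
      obtain ⟨-, ⟨x, rfl⟩, -, ⟨y, rfl⟩, hxy⟩ := Set.mem_mul.mp hgmem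
      have hh2 : g * A₁.θ p x = g' * A₁.θ q y⁻¹ := by
        rw [A₁.theta_inv_s7, eq_mul_inv_iff_mul_eq, mul_assoc, hxy]
        exact mul_inv_cancel_left g g'
      have hmem1 : (f.φG (g * A₁.θ p x))⁻¹ * k ∈ Set.range (A₂.θ (f.φP p)) := by
        refine ⟨(f.φG x)⁻¹ * u₂, ?_⟩
        rw [A₂.θ_hom, A₂.theta_inv_s7, ← f.equivariant, hk1, map_mul]
        group
      have hmem2 : (f.φG (g * A₁.θ p x))⁻¹ * k ∈ Set.range (A₂.θ (f.φP q)) := by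
        refine ⟨(f.φG y⁻¹)⁻¹ * v₂, ?_⟩
        rw [A₂.θ_hom, A₂.theta_inv_s7, ← f.equivariant, hh2, hk2, map_mul]
        group
      have hmeet : (f.φG (g * A₁.θ p x))⁻¹ * k ∈ Set.range (A₂.θ (f.φP r₁)) := by
        rw [← hθ]; exact ⟨hmem1, hmem2⟩
      obtain ⟨w, hw⟩ := hmeet
      refine ⟨(g * A₁.θ p x, r₁), ⟨?_, ?_⟩, (w, t₀), ?_⟩
      · exact A₁.mem_sdIdeal_s7.mpr ⟨⟨x, rfl⟩, ⟨u₁, hu₁⟩⟩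
      · exact A₁.mem_sdIdeal_s7.mpr ⟨⟨y⁻¹, hh2⟩, ⟨v₁, hv₁⟩⟩
      · have h1 : k = f.φG (g * A₁.θ p x) * A₂.θ (f.φP r₁) w := by
          rw [hw, mul_inv_cancel_left]
        exact Prod.ext_iff.mpr ⟨h1, hst0⟩
    · rintro y ⟨⟨h, r⟩, ⟨hma, hmb⟩, ⟨w, t⟩, rfl⟩
      exact ⟨f.sdMul_mem hma w t, f.sdMul_mem hmb w t⟩
end

section
/- Let (G₁,P₁,θ₁) and (G₂,P₂,θ₂) be algebraic dynamical systems and let (φ_G,φ_P) be an admissible morphism between them. If p ∈ P₁ is such that θ_{2,φ_P(p)} is an automorphism of G₂ (i.e. surjective), then θ_{1,p} is an automorphism of G₁ (i.e. surjective). -/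
open Pointwise

/-- an admissible morphism forces `θ_{1,p}` to be an automorphism whenever
`θ_{2,φ_P(p)}` is an automorphism. -/
theorem admissible_surjective_of_surjective {G₁ P₁ G₂ P₂ : Type*}
    [Group G₁] [Monoid P₁] [Group G₂] [Monoid P₂]
    (A₁ : AlgDynSys G₁ P₁) (A₂ : AlgDynSys G₂ P₂) (f : ADSHom A₁ A₂)
    (hf : f.Admissible) (p : P₁)
    (hsurj : Function.Surjective (A₂.θ (f.φP p))) :
    Function.Surjective (A₁.θ p) := by
  have hne : (rIdeal p ∩ rIdeal p).Nonempty := ⟨p, ⟨1, mul_one p⟩, ⟨1, mul_one p⟩⟩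
  have h := hf.2 p p hne
  have hr2 : Set.range (A₂.θ (f.φP p)) = Set.univ := Set.range_eq_univ.mpr hsurj
  rw [hr2, Set.univ_mul_univ, Set.inter_univ, Set.preimage_range] at h
  intro g
  have hg : g ∈ Set.range (A₁.θ p) * Set.range (A₁.θ p) := by rw [← h]; trivial
  obtain ⟨a, ⟨x, hx⟩, b, ⟨y, hy⟩, hab⟩ := hg
  exact ⟨x * y, by rw [A₁.θ_hom, hx, hy]; exact hab⟩
end

section
/- Let (G,P,θ) be an algebraic dynamical system. Then the semidirect product G ⋊_θ P is a left Ore semigroup (i.e. cancellative and right reversible) if and only if P is a left Ore semigroup. -/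
open Pointwise

/-- `G ⋊_θ P` is a left Ore semigroup (cancellative and right reversible)
iff `P` is a left Ore semigroup. -/
theorem sdp_left_ore_iff {G P : Type*} [Group G] [Monoid P] (A : AlgDynSys G P) :
    ((∀ x y z : G × P, A.sdMul x y = A.sdMul x z → y = z) ∧
     (∀ x y z : G × P, A.sdMul x z = A.sdMul y z → x = y) ∧
     (∀ x y : G × P, ∃ a b : G × P, A.sdMul a x = A.sdMul b y)) ↔
    ((∀ a b c : P, a * b = a * c → b = c) ∧
     (∀ a b c : P, a * c = b * c → a = b) ∧
     (∀ a b : P, ∃ c d : P, c * a = d * b)) := by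
  have hθone : ∀ p : P, A.θ p 1 = 1 := fun p => by
    have := A.θ_hom p 1 1
    rw [one_mul] at this
    exact (left_eq_mul.mp this)
  constructor
  · rintro ⟨hl, hr, hrev⟩
    refine ⟨fun a b c h => ?_, fun a b c h => ?_, fun a b => ?_⟩
    · have := hl (1, a) (1, b) (1, c) (by
        simp only [AlgDynSys.sdMul, Prod.mk.injEq, hθone]
        exact ⟨trivial, h⟩)
      exact congrArg Prod.snd this
    · have := hr (1, a) (1, b) (1, c) (by
        simp only [AlgDynSys.sdMul, Prod.mk.injEq, hθone]
        exact ⟨trivial, h⟩)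
      exact congrArg Prod.snd this
    · obtain ⟨x, y, hxy⟩ := hrev (1, a) (1, b)
      exact ⟨x.2, y.2, congrArg Prod.snd hxy⟩
  · rintro ⟨hl, hr, hrev⟩
    refine ⟨fun x y z h => ?_, fun x y z h => ?_, fun x y => ?_⟩
    · simp only [AlgDynSys.sdMul, Prod.mk.injEq] at h
      obtain ⟨h1, h2⟩ := h
      have h2' := hl _ _ _ h2
      have h1' : A.θ x.2 y.1 = A.θ x.2 z.1 := mul_left_cancel h1
      exact Prod.ext (A.θ_inj x.2 h1') h2'
    · simp only [AlgDynSys.sdMul, Prod.mk.injEq] at h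
      obtain ⟨h1, h2⟩ := h
      have h2' : x.2 = y.2 := hr _ _ _ h2
      rw [h2'] at h1
      have h1' : x.1 = y.1 := mul_right_cancel h1
      exact Prod.ext h1' h2'
    · obtain ⟨c, d, hcd⟩ := hrev x.2 y.2
      refine ⟨(A.θ d y.1 * (A.θ c x.1)⁻¹, c), (1, d), ?_⟩
      simp only [AlgDynSys.sdMul, Prod.mk.injEq]
      constructor
      · rw [inv_mul_cancel_right, one_mul]
      · exact hcd
end

section
/- Let S be a right LCM monoid, let 𝒢 be a group, and let ι: S → 𝒢 be an injective monoid homomorphism such that every g ∈ 𝒢 can be written as g = ι(s)⁻¹·ι(t) for some s,t ∈ S. Then the stabiliser of the subset ι(S) ⊆ 𝒢 under left multiplication equals the image of the group of units: {g ∈ 𝒢 : g·ι(S) = ι(S)} = ι(S*). -/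
open Pointwise

/-- for a right LCM monoid `S` embedded in a group `𝒢 = S⁻¹S`, the
stabiliser of `ι(S)` under left multiplication is `ι(S*)`. -/
theorem stabiliser_of_S_is_units {S 𝒢 : Type*} [Monoid S] [Group 𝒢]
    (hcancel : ∀ a b c : S, a * b = a * c → b = c)
    (hlcm : ∀ p q : S, rIdeal p ∩ rIdeal q = ∅ ∨ ∃ r, rIdeal p ∩ rIdeal q = rIdeal r)
    (ι : S →* 𝒢) (hinj : Function.Injective ι)
    (hgen : ∀ g : 𝒢, ∃ s t : S, g = (ι s)⁻¹ * ι t) :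
    {g : 𝒢 | (fun x => g * x) '' Set.range ι = Set.range ι} =
      ι '' {s : S | IsUnit s} := by
  ext g
  constructor
  · intro hg
    simp only [Set.mem_setOf_eq] at hg
    -- g = g * ι 1 ∈ g · ι(S) = ι(S)
    have hgmem : g ∈ Set.range ι := by
      rw [← hg]
      exact ⟨ι 1, ⟨1, rfl⟩, by simp⟩
    obtain ⟨a, ha⟩ := hgmem
    -- 1 = ι 1 ∈ ι(S) = g · ι(S)
    have h1 : (1 : 𝒢) ∈ (fun x => g * x) '' Set.range ι := by
      rw [hg]; exact ⟨1, map_one ι⟩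
    obtain ⟨x, ⟨b, hb⟩, hx⟩ := h1
    subst hb
    have hx' : g * ι b = 1 := hx
    have hab : a * b = 1 := by
      apply hinj
      rw [map_mul, map_one, ha, hx']
    have hb : ι b = g⁻¹ := eq_inv_of_mul_eq_one_right hx'
    have hba : b * a = 1 := by
      apply hinj
      rw [map_mul, map_one, ha, hb, inv_mul_cancel]
    exact ⟨a, ⟨⟨a, b, hab, hba⟩, rfl⟩, ha⟩
  · rintro ⟨s, hs, rfl⟩
    simp only [Set.mem_setOf_eq]
    obtain ⟨u, rfl⟩ := hs
    ext y
    constructor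
    · rintro ⟨x, ⟨t, rfl⟩, rfl⟩
      exact ⟨(u : S) * t, by rw [map_mul]⟩
    · rintro ⟨t, rfl⟩
      exact ⟨ι ((u⁻¹ : Sˣ) * t), ⟨_, rfl⟩, by
        show ι ↑u * ι (↑u⁻¹ * t) = ι t
        rw [← map_mul, ← mul_assoc, Units.mul_inv, one_mul]⟩
end

section
/- Let P be a right LCM monoid and G₀ a group, and let G = ⊕_P G₀ be the direct sum (the group of finitely supported functions P → G₀ under pointwise multiplication). For p ∈ P define θ_p: G → G by (θ_p f)(r) = f(q) if r = pq for some (necessarily unique) q ∈ P, and (θ_p f)(r) = 1 if r ∉ pP. Then: each θ_p is an injective group endomorphism of G with image θ_p(G) = {f ∈ G : supp(f) ⊆ pP}; θ_1 = id and θ_{pq} = θ_p ∘ θ_q for all p,q ∈ P; and whenever p,q,r ∈ P satisfy pP ∩ qP = rP one has θ_p(G) ∩ θ_q(G) = θ_r(G). Hence (G,P,θ) is an algebraic dynamical system. -/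
open Pointwise

open scoped Classical

/-- The shift endomorphism of `∏_P G₀` along `p ∈ P`:
`(θ_p f)(r) = f(q)` if `r = pq`, and `1` otherwise. -/
noncomputable def shift {P : Type*} [Monoid P] {G₀ : Type*} [Group G₀]
    (p : P) (f : P → G₀) : P → G₀ :=
  fun r => if h : ∃ q : P, r = p * q then f h.choose else 1

lemma shift_apply_mul {P : Type*} [Monoid P] {G₀ : Type*} [Group G₀]
    (hc : ∀ a b c : P, a * b = a * c → b = c) (p q : P) (f : P → G₀) :
    shift p f (p * q) = f q := by
  unfold shift
  rw [dif_pos ⟨q, rfl⟩]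
  exact (congrArg f (hc p q _ (⟨q, rfl⟩ : ∃ s : P, p * q = p * s).choose_spec)).symm

lemma shift_apply_not {P : Type*} [Monoid P] {G₀ : Type*} [Group G₀]
    (p : P) (f : P → G₀) {r : P} (h : ¬ ∃ q : P, r = p * q) :
    shift p f r = 1 := dif_neg h

lemma shift_support {P : Type*} [Monoid P] {G₀ : Type*} [Group G₀]
    (p : P) (f : P → G₀) :
    Function.mulSupport (shift p f) ⊆ (fun q => p * q) '' Function.mulSupport f := by
  intro r hr
  by_cases h : ∃ q : P, r = p * q
  · refine ⟨h.choose, ?_, h.choose_spec.symm⟩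
    intro hf
    apply hr
    unfold shift
    rw [dif_pos h, hf]
  · exact absurd (shift_apply_not p f h) hr

/-- for a right LCM monoid `P` and a group `G₀`, the shift action `θ` on the
direct sum `G = ⊕_P G₀` (finitely supported functions `P → G₀`) consists of injective
group endomorphisms with `θ_p(G) = {f ∈ G : supp f ⊆ pP}`, satisfies `θ_1 = id`,
`θ_{pq} = θ_p ∘ θ_q`, and respects the order on `P`; hence `(G,P,θ)` is an algebraic
dynamical system. -/
theorem shift_algebraic_dynamical_system {P G₀ : Type*} [Monoid P] [Group G₀]
    (hcancel : ∀ a b c : P, a * b = a * c → b = c)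
    (hlcm : ∀ p q : P, rIdeal p ∩ rIdeal q = ∅ ∨ ∃ r, rIdeal p ∩ rIdeal q = rIdeal r) :
    (∀ p : P, ∀ f : P → G₀, (Function.mulSupport f).Finite →
      (Function.mulSupport (shift p f)).Finite) ∧
    (∀ (p : P) (f g : P → G₀), (Function.mulSupport f).Finite →
      (Function.mulSupport g).Finite → shift p (f * g) = shift p f * shift p g) ∧
    (∀ p : P, Set.InjOn (shift (G₀ := G₀) p) {f | (Function.mulSupport f).Finite}) ∧
    (∀ p : P, shift (G₀ := G₀) p '' {f | (Function.mulSupport f).Finite} =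
      {f | (Function.mulSupport f).Finite ∧ Function.mulSupport f ⊆ rIdeal p}) ∧
    (∀ f : P → G₀, (Function.mulSupport f).Finite → shift (1 : P) f = f) ∧
    (∀ (p q : P) (f : P → G₀), (Function.mulSupport f).Finite →
      shift (p * q) f = shift p (shift q f)) ∧
    (∀ p q r : P, rIdeal p ∩ rIdeal q = rIdeal r →
      (shift (G₀ := G₀) p '' {f | (Function.mulSupport f).Finite}) ∩
        (shift (G₀ := G₀) q '' {f | (Function.mulSupport f).Finite}) =
          shift (G₀ := G₀) r '' {f | (Function.mulSupport f).Finite}) := by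
  have hfin : ∀ p : P, ∀ f : P → G₀, (Function.mulSupport f).Finite →
      (Function.mulSupport (shift p f)).Finite := by
    intro p f hf
    exact (hf.image _).subset (shift_support p f)
  have himg : ∀ p : P, shift (G₀ := G₀) p '' {f | (Function.mulSupport f).Finite} =
      {f | (Function.mulSupport f).Finite ∧ Function.mulSupport f ⊆ rIdeal p} := by
    intro p
    ext g
    constructor
    · rintro ⟨f, hf, rfl⟩
      refine ⟨hfin p f hf, ?_⟩
      intro r hr
      by_cases h : ∃ q : P, r = p * q
      · exact ⟨h.choose, h.choose_spec.symm⟩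
      · exact absurd (shift_apply_not p f h) hr
    · rintro ⟨hgfin, hgsub⟩
      refine ⟨fun q => g (p * q), ?_, ?_⟩
      · have hsub : Function.mulSupport (fun q => g (p * q)) ⊆
            (fun q => p * q) ⁻¹' Function.mulSupport g := fun q hq => hq
        exact ((hgfin.preimage (fun a _ b _ h => hcancel p a b h)).subset hsub)
      · funext r
        by_cases h : ∃ q : P, r = p * q
        · obtain ⟨q, rfl⟩ := h
          rw [shift_apply_mul hcancel]
        · rw [shift_apply_not _ _ h]
          by_contra hg
          exact h (let ⟨q, hq⟩ := hgsub (Ne.symm hg) ; ⟨q, hq.symm⟩)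
  refine ⟨hfin, ?_, ?_, himg, ?_, ?_, ?_⟩
  · intro p f g _ _
    funext r
    unfold shift
    by_cases h : ∃ q : P, r = p * q
    · simp [dif_pos h]
    · simp [dif_neg h]
  · intro p f hf g hg hfg
    funext q
    have := congrFun hfg (p * q)
    rwa [shift_apply_mul hcancel, shift_apply_mul hcancel] at this
  · intro f _
    funext r
    have : r = 1 * r := (one_mul r).symm
    calc shift 1 f r = shift 1 f (1 * r) := by rw [one_mul]
      _ = f r := shift_apply_mul hcancel 1 r f
  · intro p q f _
    funext r
    by_cases h : ∃ s : P, r = p * q * s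
    · obtain ⟨s, rfl⟩ := h
      rw [shift_apply_mul hcancel, mul_assoc, shift_apply_mul hcancel,
        shift_apply_mul hcancel]
    · rw [shift_apply_not _ _ h]
      by_cases h' : ∃ t : P, r = p * t
      · obtain ⟨t, rfl⟩ := h'
        rw [shift_apply_mul hcancel]
        refine (shift_apply_not _ _ ?_).symm
        rintro ⟨s, rfl⟩
        exact h ⟨s, by rw [mul_assoc]⟩
      · exact (shift_apply_not _ _ h').symm
  · intro p q r hr
    rw [himg p, himg q, himg r]
    ext g
    constructor
    · rintro ⟨⟨hg, hp⟩, ⟨_, hq⟩⟩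
      exact ⟨hg, fun x hx => hr ▸ ⟨hp hx, hq hx⟩⟩
    · rintro ⟨hg, hsub⟩
      have : Function.mulSupport g ⊆ rIdeal p ∩ rIdeal q := hr ▸ hsub
      exact ⟨⟨hg, fun x hx => (this hx).1⟩, ⟨hg, fun x hx => (this hx).2⟩⟩
end
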